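/- Let X be a real normed space such that for every countable set A ⊆ S_{X*} there exist B ⊆ S_X and y ∈ S_X with: B norms A (for every x* ∈ A and ε > 0 there is x ∈ B with x*(x) ≥ 1 − ε) and ‖y + x‖ = ‖y − x‖ = 1 for every x ∈ B. Then X has the 1-ASD2P_ω: for every countable A ⊆ S_{X*} there exist B' ⊆ S_X and x* ∈ S_{X*} such that B' norms A and x*(x) = 1 for every x ∈ B'. -/

import Mathlib

theorem stmt_17 {X : Type*} [NormedAddCommGroup X] [NormedSpace ℝ X]
    (h : ∀ A : Set (X →L[ℝ] ℝ), A.Countable → (∀ f ∈ A, ‖f‖ = 1) →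
      ∃ (B : Set X) (y : X), (∀ x ∈ B, ‖x‖ = 1) ∧ ‖y‖ = 1 ∧
        (∀ f ∈ A, ∀ ε > (0 : ℝ), ∃ x ∈ B, f x ≥ 1 - ε) ∧
        (∀ x ∈ B, ‖y + x‖ = 1 ∧ ‖y - x‖ = 1)) :
    ∀ A : Set (X →L[ℝ] ℝ), A.Countable → (∀ f ∈ A, ‖f‖ = 1) →
      ∃ (B' : Set X) (g : X →L[ℝ] ℝ), (∀ x ∈ B', ‖x‖ = 1) ∧ ‖g‖ = 1 ∧
        (∀ f ∈ A, ∀ ε > (0 : ℝ), ∃ x ∈ B', f x ≥ 1 - ε) ∧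
        (∀ x ∈ B', g x = 1) := by
  intro A hAc hA1
  obtain ⟨B, y, hB1, hy, hBn, hBs⟩ := h A hAc hA1
  have hy0 : y ≠ 0 := by
    intro h0
    rw [h0, norm_zero] at hy
    exact one_ne_zero hy.symm
  obtain ⟨g, hg1, hgy⟩ := exists_dual_vector ℝ y (norm_ne_zero_iff.mpr hy0)
  rw [hy] at hgy
  -- g vanishes on B
  have hgx : ∀ x ∈ B, g x = 0 := by
    intro x hx
    have h1 : g (y + x) ≤ 1 := by
      calc g (y + x) ≤ ‖g (y + x)‖ := le_abs_self _
        _ ≤ ‖g‖ * ‖y + x‖ := ContinuousLinearMap.le_opNorm g _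
        _ = 1 := by rw [hg1, (hBs x hx).1, one_mul]
    have h2 : g (y - x) ≤ 1 := by
      calc g (y - x) ≤ ‖g (y - x)‖ := le_abs_self _
        _ ≤ ‖g‖ * ‖y - x‖ := ContinuousLinearMap.le_opNorm g _
        _ = 1 := by rw [hg1, (hBs x hx).2, one_mul]
    rw [map_add] at h1
    rw [map_sub] at h2
    have := hgy
    -- hgy : g y = 1 ... but it's coerced; normalize
    have hgy' : g y = 1 := hgy
    linarith
  -- every f in A vanishes at y
  have hfy : ∀ f ∈ A, f y = 0 := by
    intro f hf
    have key : ∀ ε > (0 : ℝ), f y ≤ ε ∧ -ε ≤ f y := by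
      intro ε hε
      obtain ⟨x, hx, hfx⟩ := hBn f hf ε hε
      have h1 : f (y + x) ≤ 1 := by
        calc f (y + x) ≤ ‖f (y + x)‖ := le_abs_self _
          _ ≤ ‖f‖ * ‖y + x‖ := ContinuousLinearMap.le_opNorm f _
          _ = 1 := by rw [hA1 f hf, (hBs x hx).1, one_mul]
      have h2 : -1 ≤ f (y - x) := by
        have := ContinuousLinearMap.le_opNorm f (y - x)
        have habs : |f (y - x)| ≤ 1 := by
          calc |f (y - x)| = ‖f (y - x)‖ := rfl
            _ ≤ ‖f‖ * ‖y - x‖ := ContinuousLinearMap.le_opNorm f _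
            _ = 1 := by rw [hA1 f hf, (hBs x hx).2, one_mul]
        linarith [neg_abs_le (f (y - x))]
      rw [map_add] at h1
      rw [map_sub] at h2
      constructor <;> linarith
    have h1 : f y ≤ 0 := by
      by_contra hlt
      push_neg at hlt
      have := (key (f y / 2) (by linarith)).1
      linarith
    have h2 : 0 ≤ f y := by
      by_contra hlt
      push_neg at hlt
      have := (key (-(f y) / 2) (by linarith)).2
      linarith
    linarith
  refine ⟨(fun x => y + x) '' B, g, ?_, hg1, ?_, ?_⟩
  · rintro z ⟨x, hx, rfl⟩
    exact (hBs x hx).1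
  · intro f hf ε hε
    obtain ⟨x, hx, hfx⟩ := hBn f hf ε hε
    refine ⟨y + x, ⟨x, hx, rfl⟩, ?_⟩
    rw [map_add, hfy f hf, zero_add]
    exact hfx
  · rintro z ⟨x, hx, rfl⟩
    rw [map_add, hgx x hx, add_zero]
    exact hgy
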